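/- Let A_1, A_2, …, A_m be N×N row-stochastic matrices, B_m = A_1 A_2 ⋯ A_m and C_m = A_1 + ⋯ + A_m. Then for every nonempty proper subset S of {1,…,N}, ∑_{i∈S, j∉S} (B_m)_{ij} ≤ (N − 1) ∑_{i∈S, j∉S} (C_m)_{ij}. -/

import Mathlib

open Finset

theorem stmt7 (N m : ℕ) (hN : 2 ≤ N) (hm : 1 ≤ m)
    (A : Fin m → Matrix (Fin N) (Fin N) ℝ)
    (hnonneg : ∀ k i j, 0 ≤ A k i j)
    (hrow : ∀ k i, ∑ j, A k i j = 1)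
    (S : Finset (Fin N)) (hS : S.Nonempty) (hS' : S ≠ Finset.univ) :
    ∑ i ∈ S, ∑ j ∈ Sᶜ, (List.ofFn A).prod i j ≤
      ((N : ℝ) - 1) * ∑ i ∈ S, ∑ j ∈ Sᶜ, (∑ k, A k) i j := by
  classical
  set bd : Matrix (Fin N) (Fin N) ℝ → ℝ := fun M => ∑ i ∈ S, ∑ j ∈ Sᶜ, M i j with hbd
  set RS : Matrix (Fin N) (Fin N) ℝ → Prop :=
    fun M => (∀ i j, 0 ≤ M i j) ∧ (∀ i, ∑ j, M i j = 1) with hRS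
  -- card bound
  have hcard : (S.card : ℝ) ≤ (N : ℝ) - 1 := by
    have h1 : S.card < N := by
      have := (Finset.card_lt_card (lt_of_le_of_ne (Finset.subset_univ S)
        hS')).trans_le (le_of_eq (Finset.card_univ.trans (Fintype.card_fin N)))
      exact this
    have : S.card ≤ N - 1 := Nat.le_sub_one_of_lt h1
    have h2 : (S.card : ℝ) ≤ ((N - 1 : ℕ) : ℝ) := by exact_mod_cast this
    calc (S.card : ℝ) ≤ ((N - 1 : ℕ) : ℝ) := h2
      _ = (N : ℝ) - 1 := by
          have : 1 ≤ N := by omega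
          push_cast [this]
          ring
  have hNR : (1 : ℝ) ≤ (N : ℝ) - 1 := by
    have : (2 : ℝ) ≤ N := by exact_mod_cast hN
    linarith
  -- product of RS is RS
  have rsmul : ∀ P Q, RS P → RS Q → RS (P * Q) := by
    intro P Q hP hQ
    constructor
    · intro i j
      rw [Matrix.mul_apply]
      exact Finset.sum_nonneg fun l _ => mul_nonneg (hP.1 i l) (hQ.1 l j)
    · intro i
      simp only [Matrix.mul_apply]
      rw [Finset.sum_comm]
      calc ∑ l, ∑ j, P i l * Q l j = ∑ l, P i l * ∑ j, Q l j := by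
            simp [Finset.mul_sum]
        _ = ∑ l, P i l := by simp [hQ.2]
        _ = 1 := hP.2 i
  have rsone : RS 1 := by
    constructor
    · intro i j
      by_cases h : i = j <;> simp [Matrix.one_apply, h]
    · intro i; simp [Matrix.one_apply]
  have rsprod : ∀ L : List (Matrix (Fin N) (Fin N) ℝ), (∀ M ∈ L, RS M) → RS L.prod := by
    intro L
    induction L with
    | nil => intro _; simpa using rsone
    | cons P L ih =>
      intro h
      rw [List.prod_cons]
      exact rsmul _ _ (h P (by simp)) (ih fun M hM => h M (by simp [hM]))
  -- bd nonneg
  have bdnn : ∀ M, RS M → 0 ≤ bd M := by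
    intro M hM
    exact Finset.sum_nonneg fun i _ => Finset.sum_nonneg fun j _ => hM.1 i j
  -- key step
  have step : ∀ B Q, RS B → RS Q → bd (B * Q) ≤ bd B + ((N : ℝ) - 1) * bd Q := by
    intro B Q hB hQ
    have hrowQ : ∀ l, ∑ j ∈ Sᶜ, Q l j ≤ 1 := by
      intro l
      calc ∑ j ∈ Sᶜ, Q l j ≤ ∑ j, Q l j :=
            Finset.sum_le_sum_of_subset_of_nonneg (Finset.subset_univ _)
              (fun j _ _ => hQ.1 l j)
        _ = 1 := hQ.2 l
    have hBle1 : ∀ i l, B i l ≤ 1 := by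
      intro i l
      calc B i l ≤ ∑ j, B i j :=
            Finset.single_le_sum (fun j _ => hB.1 i j) (Finset.mem_univ l)
        _ = 1 := hB.2 i
    have hQnn : ∀ l, 0 ≤ ∑ j ∈ Sᶜ, Q l j :=
      fun l => Finset.sum_nonneg fun j _ => hQ.1 l j
    have expand : bd (B * Q)
        = ∑ i ∈ S, (∑ l ∈ S, B i l * (∑ j ∈ Sᶜ, Q l j)
            + ∑ l ∈ Sᶜ, B i l * (∑ j ∈ Sᶜ, Q l j)) := by
      simp only [hbd, Matrix.mul_apply]
      refine Finset.sum_congr rfl fun i _ => ?_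
      rw [Finset.sum_comm]
      simp_rw [← Finset.mul_sum]
      rw [← Finset.sum_add_sum_compl S (fun l => B i l * ∑ j ∈ Sᶜ, Q l j)]
    have e1 : ∑ l ∈ S, ∑ j ∈ Sᶜ, Q l j = bd Q := rfl
    have e2 : ∑ i ∈ S, ∑ l ∈ Sᶜ, B i l = bd B := rfl
    calc bd (B * Q) = _ := expand
      _ ≤ ∑ i ∈ S, (∑ l ∈ S, (∑ j ∈ Sᶜ, Q l j) + ∑ l ∈ Sᶜ, B i l) := by
          refine Finset.sum_le_sum fun i _ => add_le_add ?_ ?_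
          · refine Finset.sum_le_sum fun l _ => ?_
            nlinarith [hBle1 i l, hQnn l, hB.1 i l]
          · refine Finset.sum_le_sum fun l _ => ?_
            nlinarith [hrowQ l, hB.1 i l, hQnn l]
      _ = (S.card : ℝ) * bd Q + bd B := by
          rw [Finset.sum_add_distrib, Finset.sum_const, nsmul_eq_mul, e1, e2]
      _ ≤ bd B + ((N : ℝ) - 1) * bd Q := by
          nlinarith [bdnn Q hQ, hcard]
  -- main induction
  have main : ∀ L : List (Matrix (Fin N) (Fin N) ℝ), (∀ M ∈ L, RS M) →
      bd L.prod ≤ ((N : ℝ) - 1) * (L.map bd).sum := by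
    intro L
    induction L using List.reverseRecOn with
    | nil =>
      intro _
      simp only [List.prod_nil, List.map_nil, List.sum_nil, mul_zero]
      have : bd (1 : Matrix (Fin N) (Fin N) ℝ) = 0 := by
        simp only [hbd]
        refine Finset.sum_eq_zero fun i hi => Finset.sum_eq_zero fun j hj => ?_
        have : i ≠ j := fun h => (Finset.mem_compl.mp hj) (h ▸ hi)
        simp [Matrix.one_apply, this]
      simp [this]
    | append_singleton L Q ih =>
      intro h
      have hL : ∀ M ∈ L, RS M := fun M hM => h M (by simp [hM])
      have hQ : RS Q := h Q (by simp)
      have hBL : RS L.prod := rsprod L hL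
      rw [List.prod_append, List.prod_cons, List.prod_nil, mul_one]
      calc bd (L.prod * Q) ≤ bd L.prod + ((N : ℝ) - 1) * bd Q := step _ _ hBL hQ
        _ ≤ ((N : ℝ) - 1) * (L.map bd).sum + ((N : ℝ) - 1) * bd Q := by
            linarith [ih hL]
        _ = ((N : ℝ) - 1) * ((L ++ [Q]).map bd).sum := by
            simp [mul_add]
  -- finish
  have hRHS : ∑ i ∈ S, ∑ j ∈ Sᶜ, (∑ k, A k) i j = ((List.ofFn A).map bd).sum := by
    simp only [hbd, Matrix.sum_apply, List.map_ofFn, List.sum_ofFn, Function.comp]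
    calc ∑ i ∈ S, ∑ j ∈ Sᶜ, ∑ k, A k i j
        = ∑ i ∈ S, ∑ k, ∑ j ∈ Sᶜ, A k i j :=
          Finset.sum_congr rfl fun i _ => Finset.sum_comm
      _ = ∑ k, ∑ i ∈ S, ∑ j ∈ Sᶜ, A k i j := Finset.sum_comm
  rw [hRHS]
  exact main (List.ofFn A) (by
    intro M hM
    obtain ⟨k, rfl⟩ := List.mem_ofFn.mp hM
    exact ⟨hnonneg k, hrow k⟩)
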